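/- Let N be a numerical semigroup with minimal system of generators n_1 < n_2 < ... < n_r. Then the effective weight of N satisfies ewt(N) = Σ_{ℓ ∉ End(N)} #A_ℓ, where the sum runs over all positive integers ℓ not belonging to End(N). -/

import Mathlib

private lemma sum_boole_card (s : Finset ℕ) (p : ℕ → Prop) [DecidablePred p] :
    (∑ x ∈ s, if p x then (1:ℕ) else 0) = (s.filter p).card :=
  (Finset.card_filter _ _).symm

private lemma ite_sum_push {α : Type*} (c : Prop) [Decidable c] (s : Finset α) (f : α → ℕ) :
    (if c then ∑ x ∈ s, f x else 0) = ∑ x ∈ s, if c then f x else 0 := by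
  split <;> simp

/-- Let `N` be a numerical semigroup with minimal system of generators
`n₁ < ⋯ < n_r`.  Then `ewt(N) = Σ_{ℓ ∉ End(N)} #A_ℓ`, where the sum runs over all positive
integers `ℓ` not belonging to `End(N)`.  Here `End(N) = {n : n + s ∈ N for all 0 ≠ s ∈ N}`,
`ewt(N) = Σ_{gaps ℓ} #{i : nᵢ < ℓ}` and `A_ℓ = {i : nᵢ + ℓ ∉ N}`. -/
theorem effective_weight_eq_sum_card_A
    (N : Set ℕ) (h0 : (0 : ℕ) ∈ N)
    (hadd : ∀ a ∈ N, ∀ b ∈ N, a + b ∈ N)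
    (hfin : (Nᶜ : Set ℕ).Finite)
    (r : ℕ) (n : Fin r → ℕ) (hmono : StrictMono n)
    (hgen : N = (AddSubmonoid.closure (Set.range n) : Set ℕ))
    (hmin : ∀ i : Fin r, n i ∉ AddSubmonoid.closure (Set.range n \ {n i})) :
    (∑ᶠ ℓ ∈ (Nᶜ : Set ℕ), {i : Fin r | n i < ℓ}.ncard)
      = ∑ᶠ ℓ ∈ {ℓ : ℕ | 0 < ℓ ∧ ¬ (∀ s ∈ N, s ≠ 0 → ℓ + s ∈ N)},
          {i : Fin r | n i + ℓ ∉ N}.ncard := by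
  classical
  have hsub : Set.range n ⊆ N := by
    rw [hgen]; exact AddSubmonoid.subset_closure
  have hmemN : ∀ i, n i ∈ N := fun i => hsub ⟨i, rfl⟩
  have hpos : ∀ i, 0 < n i := by
    intro i
    rcases Nat.eq_zero_or_pos (n i) with h | h
    · exact absurd (by rw [h]; exact AddSubmonoid.zero_mem _) (hmin i)
    · exact h
  obtain ⟨B, hB⟩ := hfin.bddAbove
  set M := B + 1 with hMdef
  have hMN : ∀ m, M ≤ m → m ∈ N := by
    intro m hm
    by_contra hmn
    have : m ≤ B := hB hmn
    omega
  -- describe both index sets as finsets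
  have hNc : (Nᶜ : Set ℕ) = ↑((Finset.range M).filter (fun ℓ => ℓ ∉ N)) := by
    ext ℓ
    constructor
    · intro h
      simp only [Set.mem_compl_iff] at h
      have hlt : ℓ < M := by
        by_contra hc
        exact h (hMN ℓ (by omega))
      simp only [Finset.mem_coe, Finset.mem_filter, Finset.mem_range]
      exact ⟨hlt, h⟩
    · intro h
      simp only [Finset.mem_coe, Finset.mem_filter] at h
      exact h.2
  have hSc : {ℓ : ℕ | 0 < ℓ ∧ ¬ (∀ s ∈ N, s ≠ 0 → ℓ + s ∈ N)} =
      ↑((Finset.range M).filter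
        (fun ℓ => 0 < ℓ ∧ ¬ (∀ s ∈ N, s ≠ 0 → ℓ + s ∈ N))) := by
    ext ℓ
    constructor
    · rintro ⟨h1, h2⟩
      have hlt : ℓ < M := by
        by_contra hc
        exact h2 (fun s hs hs0 => hMN _ (by omega))
      simp only [Finset.mem_coe, Finset.mem_filter, Finset.mem_range]
      exact ⟨hlt, h1, h2⟩
    · intro h
      simp only [Finset.mem_coe, Finset.mem_filter] at h
      exact h.2
  rw [hNc, hSc, finsum_mem_coe_finset, finsum_mem_coe_finset]
  -- ncard as filter card
  have hcard : ∀ (p : Fin r → Prop), {i | p i}.ncard = (Finset.univ.filter p).card := by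
    intro p
    rw [← Set.ncard_coe_finset]
    congr 1
    ext i
    simp
  simp only [hcard]
  -- Fubini
  simp only [Finset.card_filter, Finset.sum_filter, ite_sum_push, ← ite_and]
  rw [Finset.sum_comm, Finset.sum_comm (s := Finset.range M) (t := (Finset.univ : Finset (Fin r)))]
  refine Finset.sum_congr rfl fun i _ => ?_
  -- simplify the RHS condition
  have hcondeq : ∀ ℓ : ℕ,
      ((0 < ℓ ∧ ¬ (∀ s ∈ N, s ≠ 0 → ℓ + s ∈ N)) ∧ n i + ℓ ∉ N)
        ↔ (0 < ℓ ∧ n i + ℓ ∉ N) := by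
    intro ℓ
    constructor
    · rintro ⟨⟨h1, _⟩, h2⟩; exact ⟨h1, h2⟩
    · rintro ⟨h1, h2⟩
      refine ⟨⟨h1, fun hall => ?_⟩, h2⟩
      have := hall (n i) (hmemN i) (hpos i).ne'
      exact h2 (by rwa [Nat.add_comm] at this)
  simp only [hcondeq]
  trans ((Finset.range M).filter (fun ℓ => ℓ ∉ N ∧ n i < ℓ)).card
  · refine Eq.trans ?_ (Finset.card_filter _ _).symm
    refine Finset.sum_congr rfl fun ℓ _ => ?_
    congr 1
  trans ((Finset.range M).filter (fun ℓ => 0 < ℓ ∧ n i + ℓ ∉ N)).card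
  swap
  · refine Eq.trans (Finset.card_filter _ _) ?_
    refine Finset.sum_congr rfl fun ℓ _ => ?_
    congr 1
  -- bijection ℓ ↦ n i + ℓ
  symm
  apply Finset.card_nbij (fun ℓ => n i + ℓ)
  · intro ℓ hℓ
    simp only [Finset.mem_coe, Finset.mem_filter, Finset.mem_range] at hℓ ⊢
    obtain ⟨hℓM, hℓ0, hℓN⟩ := hℓ
    refine ⟨?_, hℓN, by omega⟩
    by_contra hc
    exact hℓN (hMN _ (by omega))
  · intro a _ b _ hab
    simpa using hab
  · intro m hm
    simp only [Finset.coe_filter, Set.mem_setOf_eq, Finset.mem_range] at hm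
    obtain ⟨hmM, hmN, hmi⟩ := hm
    refine ⟨m - n i, ?_, ?_⟩
    · simp only [Finset.coe_filter, Set.mem_setOf_eq, Finset.mem_range]
      refine ⟨by omega, by omega, ?_⟩
      have h' : n i + (m - n i) = m := by omega
      rw [h']; exact hmN
    · show n i + (m - n i) = m
      omega
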